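/- Let k ≥ 3, n > 3k-2, and set V_n^(k) = W_{n-2k}^(k) W_{n-2k-1}^(k) ... W_{n-3k+3}^(k). Then the word V_n^(k) occurs exactly once as a factor in W_{n-2k+1}^(k). -/

import Mathlib

def kbon (k : ℕ) (n : ℕ) : ℕ :=
  if _h1 : n < k - 1 then 0
  else if _h2 : n = k - 1 then 1
  else ∑ i ∈ Finset.range k, kbon k (n - i - 1)
termination_by n
decreasing_by omega

/-- The k-bonacci morphism on words over ℕ. -/
def phiW (k : ℕ) (w : List ℕ) : List ℕ :=
  w.flatMap (fun a => if a % k = k - 1 then [a + 1] else [k * (a / k), a + 1])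

/-- The finite k-bonacci word over the infinite alphabet ℕ. -/
def W (k n : ℕ) : List ℕ := (phiW k)^[n] [0]

lemma phiW_append (k : ℕ) (u v : List ℕ) : phiW k (u ++ v) = phiW k u ++ phiW k v :=
  List.flatMap_append ..

lemma iter_append (k n : ℕ) (u v : List ℕ) :
    (phiW k)^[n] (u ++ v) = (phiW k)^[n] u ++ (phiW k)^[n] v := by
  induction n generalizing u v with
  | zero => simp
  | succ n ih => simp [Function.iterate_succ_apply, phiW_append, ih]

lemma phiW_single_lt (k j : ℕ) (h : j < k - 1) : phiW k [j] = [0, j + 1] := by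
  have h1 : j % k = j := Nat.mod_eq_of_lt (by omega)
  have h2 : j / k = 0 := Nat.div_eq_of_lt (by omega)
  simp [phiW, h1, h2, Nat.ne_of_lt h]

lemma phiW_single_top (k : ℕ) (hk : 1 ≤ k) : phiW k [k - 1] = [k] := by
  have h1 : (k - 1) % k = k - 1 := Nat.mod_eq_of_lt (by omega)
  simp [phiW, h1]
  omega

lemma phiW_map (k : ℕ) (hk : 1 ≤ k) (w : List ℕ) :
    phiW k (w.map (· + k)) = (phiW k w).map (· + k) := by
  unfold phiW
  rw [List.flatMap_map, List.map_flatMap]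
  congr 1; funext a
  have h1 : (a + k) % k = a % k := Nat.add_mod_right a k
  have h2 : (a + k) / k = a / k + 1 := Nat.add_div_right a hk
  by_cases h : a % k = k - 1 <;> simp [h, h1, h2, Nat.mul_add] <;> omega

lemma iter_map (k : ℕ) (hk : 1 ≤ k) (n : ℕ) (w : List ℕ) :
    (phiW k)^[n] (w.map (· + k)) = ((phiW k)^[n] w).map (· + k) := by
  induction n generalizing w with
  | zero => simp
  | succ n ih => simp [Function.iterate_succ_apply, phiW_map k hk, ih]

lemma expand (k : ℕ) : ∀ c n : ℕ, c ≤ k - 1 → c ≤ n →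
    W k n = ((List.range' (n - c) c).reverse.map (W k)).flatten ++ (phiW k)^[n - c] [c] := by
  intro c
  induction c with
  | zero => intro n _ _; simp [W]
  | succ c ih =>
    intro n hc hn
    have h1 := ih n (by omega) (by omega)
    have h2 : n - c = (n - (c + 1)) + 1 := by omega
    have h3 : (phiW k)^[n - c] [c] =
        W k (n - (c + 1)) ++ (phiW k)^[n - (c + 1)] [c + 1] := by
      rw [h2, Function.iterate_succ_apply, phiW_single_lt k c (by omega)]
      show (phiW k)^[n - (c+1)] ([0] ++ [c+1]) = _
      rw [iter_append]; rfl
    rw [h1, h3]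
    have h4 : List.range' (n - (c + 1)) (c + 1) = (n - (c+1)) :: List.range' (n - c) c := by
      have h5 : n - (c+1) + 1 = n - c := by omega
      rw [List.range'_succ, h5]
    rw [h4]
    simp [List.append_assoc]

lemma W_succ (k n : ℕ) : W k (n + 1) = phiW k (W k n) := Function.iterate_succ_apply' ..

/-- structure: W k n = u ++ [n] with all letters of u < n -/
lemma W_struct (k : ℕ) (hk : 1 ≤ k) : ∀ n, ∃ u, W k n = u ++ [n] ∧ ∀ a ∈ u, a < n := by
  intro n
  induction n with
  | zero => exact ⟨[], rfl, by simp⟩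
  | succ n ih =>
    obtain ⟨u, hu, hlt⟩ := ih
    have key : ∀ a' ∈ phiW k u, a' < n + 1 := by
      intro a' ha'
      rw [phiW, List.mem_flatMap] at ha'
      obtain ⟨a, ha, hmem⟩ := ha'
      have h1 : a < n := hlt a ha
      have h2 : k * (a / k) ≤ a := Nat.mul_div_le a k
      by_cases h : a % k = k - 1 <;> simp [h] at hmem <;> omega
    rw [W_succ, hu, phiW_append]
    by_cases h : n % k = k - 1
    · refine ⟨phiW k u, ?_, key⟩
      simp [phiW, h]
    · refine ⟨phiW k u ++ [k * (n / k)], ?_, ?_⟩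
      · simp [phiW, h]
      · intro a ha
        rcases List.mem_append.1 ha with h' | h'
        · exact key a h'
        · simp at h'
          have := Nat.mul_div_le n k
          omega

lemma W_mem_le (k : ℕ) (hk : 1 ≤ k) (n : ℕ) : ∀ a ∈ W k n, a ≤ n := by
  obtain ⟨u, hu, hlt⟩ := W_struct k hk n
  intro a ha
  rw [hu, List.mem_append] at ha
  rcases ha with h | h
  · exact (hlt a h).le
  · simp at h; omega

lemma W_length_pos (k : ℕ) (hk : 1 ≤ k) (n : ℕ) : 0 < (W k n).length := by
  obtain ⟨u, hu, _⟩ := W_struct k hk n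
  simp [hu]

lemma W_last (k : ℕ) (hk : 1 ≤ k) (n : ℕ) (h : (W k n).length - 1 < (W k n).length) :
    (W k n)[(W k n).length - 1] = n := by
  obtain ⟨u, hu, _⟩ := W_struct k hk n
  have hl : (W k n).length = u.length + 1 := by simp [hu]
  simp only [hu] at h ⊢
  simp only [hu] at hl
  rw [List.getElem_append_right (by simp)]
  simp [hl]

lemma W_unique (k : ℕ) (hk : 1 ≤ k) (n i : ℕ) (hi : i < (W k n).length)
    (h : (W k n)[i] = n) : i = (W k n).length - 1 := by
  obtain ⟨u, hu, hlt⟩ := W_struct k hk n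
  have hl : (W k n).length = u.length + 1 := by simp [hu]
  by_contra hne
  have hiu : i < u.length := by omega
  simp only [hu] at h
  rw [List.getElem_append_left hiu] at h
  exact absurd h (by have := hlt _ (List.getElem_mem hiu); omega)

lemma phiW_length_ge (k : ℕ) (w : List ℕ) : w.length ≤ (phiW k w).length := by
  induction w with
  | nil => simp [phiW]
  | cons a w ih =>
    have h : phiW k (a :: w) =
        (if a % k = k - 1 then [a + 1] else [k * (a / k), a + 1]) ++ phiW k w :=
      List.flatMap_cons ..
    rw [h, List.length_append, List.length_cons]
    have h1 : 1 ≤ (if a % k = k - 1 then [a + 1] else [k * (a / k), a + 1]).length := by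
      split <;> simp
    omega

lemma W_length_mono (k : ℕ) : Monotone fun n => (W k n).length := by
  apply monotone_nat_of_le_succ
  intro n
  rw [W_succ]
  exact phiW_length_ge k _

lemma decomp (k m : ℕ) (hk : 3 ≤ k) (hm : k - 1 ≤ m) :
    W k (m + 1) = ((List.range' (m + 3 - k) (k - 2)).reverse.map (W k)).flatten
      ++ (W k (m + 2 - k) ++ (W k (m + 1 - k)).map (· + k)) := by
  have h0 := expand k (k - 2) (m + 1) (by omega) (by omega)
  have e1 : m + 1 - (k - 2) = m + 3 - k := by omega
  rw [e1] at h0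
  have t1 : (phiW k)^[m + 3 - k] [k - 2] = W k (m + 2 - k) ++ (W k (m + 1 - k)).map (· + k) := by
    have e2 : m + 3 - k = (m + 2 - k) + 1 := by omega
    rw [e2, Function.iterate_succ_apply, phiW_single_lt k (k - 2) (by omega)]
    have e4 : k - 2 + 1 = k - 1 := by omega
    rw [e4]
    have e5 : ([0, k - 1] : List ℕ) = [0] ++ [k - 1] := rfl
    rw [e5, iter_append]
    congr 1
    have e3 : m + 2 - k = (m + 1 - k) + 1 := by omega
    rw [e3, Function.iterate_succ_apply, phiW_single_top k (by omega)]
    have e6 : ([k] : List ℕ) = [0].map (· + k) := by simp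
    rw [e6, iter_map k (by omega)]
    rfl
  rw [t1] at h0
  exact h0

lemma pref_get {l v : List ℕ} {t i : ℕ} (h : v <+: l.drop t) (hi : i < v.length)
    (H : t + i < l.length) : l[t + i] = v[i] := by
  have h2 := h.getElem hi
  rw [List.getElem_drop] at h2
  exact h2.symm

lemma flatten_range'_len_ge (k s c j : ℕ) (hj : j ∈ List.range' s c) :
    (W k j).length ≤ (((List.range' s c).reverse.map (W k)).flatten).length := by
  rw [List.length_flatten]
  apply List.single_le_sum (by simp)
  simp only [List.map_map, List.mem_map]
  exact ⟨j, List.mem_reverse.2 hj, rfl⟩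

lemma flatten_range'_mem_lt (k s c b : ℕ) (hk : 1 ≤ k) (hsc : s + c ≤ b) :
    ∀ a ∈ (((List.range' s c).reverse.map (W k)).flatten), a < b := by
  intro a ha
  rw [List.mem_flatten] at ha
  obtain ⟨w, hw, haw⟩ := ha
  rw [List.mem_map] at hw
  obtain ⟨j, hj, rfl⟩ := hw
  rw [List.mem_reverse, List.mem_range'_1] at hj
  have := W_mem_le k hk j a haw
  omega

lemma pref_get? {l v : List ℕ} {t i : ℕ} (h : v <+: l.drop t) (hi : i < v.length) :
    l[t + i]? = v[i]? := by
  obtain ⟨s, hs⟩ := h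
  rw [← List.getElem?_drop, ← hs, List.getElem?_append_left hi]

lemma W_last? (k : ℕ) (hk : 1 ≤ k) (n : ℕ) : (W k n)[(W k n).length - 1]? = some n := by
  have h := W_length_pos k hk n
  rw [List.getElem?_eq_getElem (by omega)]
  exact congrArg some (W_last k hk n (by omega))

lemma W_unique? (k : ℕ) (hk : 1 ≤ k) (n i : ℕ) (h : (W k n)[i]? = some n) :
    i = (W k n).length - 1 := by
  rw [List.getElem?_eq_some_iff] at h
  obtain ⟨h1, h2⟩ := h
  exact W_unique k hk n i h1 h2

lemma mem_of_get? {l : List ℕ} {i a : ℕ} (h : l[i]? = some a) : a ∈ l := by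
  rw [List.getElem?_eq_some_iff] at h
  obtain ⟨h1, h2⟩ := h
  exact h2 ▸ List.getElem_mem h1

theorem V_occurs_once (k n : ℕ) (hk : 3 ≤ k) (hn : 3 * k - 2 < n) :
    ∃! t : ℕ,
      (((List.range' (n + 3 - 3 * k) (k - 2)).reverse).map (W k)).flatten <+:
        (W k (n - 2 * k + 1)).drop t := by
  obtain ⟨m, rfl, hm⟩ : ∃ m, n = m + 2 * k ∧ k - 1 ≤ m := ⟨n - 2 * k, by omega, by omega⟩
  have e1 : m + 2 * k - 2 * k + 1 = m + 1 := by omega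
  have e2 : m + 2 * k + 3 - 3 * k = m + 3 - k := by omega
  rw [e1, e2]
  set Vl := ((List.range' (m + 3 - k) (k - 2)).reverse.map (W k)).flatten with hV
  have hd := decomp k m hk hm
  have hr1 : List.range' (m + 3 - k) (k - 2) = List.range' (m + 3 - k) (k - 3) ++ [m] := by
    have h1 : k - 2 = (k - 3) + 1 := by omega
    have h2 : m + 3 - k + 1 * (k - 3) = m := by omega
    rw [h1, List.range'_concat, h2]
  set Rest := ((List.range' (m + 3 - k) (k - 3)).reverse.map (W k)).flatten with hRest
  have hVsplit : Vl = W k m ++ Rest := by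
    rw [hV, hr1]
    simp [hRest]
  set B := W k (m + 2 - k) with hB
  set T := (W k (m + 1 - k)).map (· + k) with hT
  set L := (W k m).length with hLd
  set f := (W k (m + 1 - k)).length with hfd
  have hd' : W k (m + 1) = W k m ++ ((Rest ++ B) ++ T) := by
    rw [hd, ← hV, hVsplit]
    simp [List.append_assoc]
  clear_value Vl Rest B T L f
  have hL1 : 1 ≤ L := hLd ▸ W_length_pos k (by omega) m
  have hf1 : 1 ≤ f := hfd ▸ W_length_pos k (by omega) (m + 1 - k)
  have hVlen : Vl.length = L + Rest.length := by rw [hVsplit, hLd]; simp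
  have hTlen : T.length = f := by rw [hT, hfd]; simp
  have hlen : (W k (m + 1)).length = L + (Rest.length + B.length) + f := by
    rw [hd']
    simp only [List.length_append]
    omega
  refine ⟨0, ⟨B ++ T, by rw [List.drop_zero, hd, ← hV]⟩, ?_⟩
  intro t ht
  by_contra ht0
  have ht1 : 1 ≤ t := by omega
  have hlen2 : t + Vl.length ≤ (W k (m + 1)).length := by
    have h1 := ht.length_le
    rw [List.length_drop] at h1
    omega
  have hy0 : Vl[L - 1]? = some m := by
    rw [hVsplit, List.getElem?_append_left (by omega : L - 1 < (W k m).length),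
      show L - 1 = (W k m).length - 1 from by omega]
    exact W_last? k (by omega) m
  have hy : (W k (m + 1))[t + (L - 1)]? = some m := by
    rw [pref_get? ht (by omega), hy0]
  -- the letter m at position t + (L-1) must lie in the tail T
  have hyT : L + (Rest.length + B.length) ≤ t + (L - 1) := by
    by_contra hc
    push_neg at hc
    have h3 := congrArg (fun l : List ℕ => l[t + (L - 1)]?) hd'
    rw [List.getElem?_append_right (by omega : (W k m).length ≤ t + (L - 1)),
      List.getElem?_append_left (by rw [List.length_append]; omega)] at h3
    have h4 : m ∈ Rest ++ B := mem_of_get? (h3.symm.trans hy)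
    rcases List.mem_append.1 h4 with h5 | h5
    · rw [hRest] at h5
      exact absurd (flatten_range'_mem_lt k _ _ m (by omega) (by omega) m h5) (lt_irrefl m)
    · rw [hB] at h5
      have := W_mem_le k (by omega) (m + 2 - k) m h5
      omega
  -- hence m ≥ k
  have hmk : k ≤ m := by
    have h3 := congrArg (fun l : List ℕ => l[t + (L - 1)]?) hd'
    rw [List.getElem?_append_right (by omega : (W k m).length ≤ t + (L - 1)),
      List.getElem?_append_right (by rw [List.length_append]; omega :
        (Rest ++ B).length ≤ t + (L - 1) - (W k m).length)] at h3
    have h4 : m ∈ T := mem_of_get? (h3.symm.trans hy)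
    rw [hT, List.mem_map] at h4
    obtain ⟨a, _, ha⟩ := h4
    omega
  rcases lt_or_ge k 4 with hk4 | hk4
  · -- k = 3 case
    have hk3 : k = 3 := by omega
    have hm3 : 3 ≤ m := by omega
    have hRnil : Rest = [] := by
      rw [hRest, show k - 3 = 0 from by omega]
      rfl
    have hR0 : Rest.length = 0 := by rw [hRnil]; rfl
    have hMB : B = W k (m - 1) := by rw [hB, show m + 2 - k = m - 1 from by omega]
    have hf2 : f = (W k (m - 2)).length := by rw [hfd, show m + 1 - k = m - 2 from by omega]
    set M := (W k (m - 1)).length with hMd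
    clear_value M
    have hBM : B.length = M := by rw [hMB, hMd]
    have hM1 : 1 ≤ M := hMd ▸ W_length_pos k (by omega) (m - 1)
    set g := (W k (m - 3)).length with hgd
    clear_value g
    have hg1 : 1 ≤ g := hgd ▸ W_length_pos k (by omega) (m - 3)
    have hdm' : W k m = W k (m - 1) ++ (W k (m - 2) ++ (W k (m - 3)).map (· + k)) := by
      have h1 := decomp k (m - 1) hk (by omega)
      rw [show m - 1 + 1 - k = m - 3 from by omega, show m - 1 + 2 - k = m - 2 from by omega,
        show m - 1 + 3 - k = m - 1 from by omega, show m - 1 + 1 = m from by omega,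
        show k - 2 = 1 from by omega] at h1
      simpa using h1
    have hgl : L = M + f + g := by
      have h2 : (W k m).length
          = (W k (m - 1)).length + ((W k (m - 2)).length + (W k (m - 3)).length) := by
        rw [hdm']; simp
      omega
    have hMfg : f + g + 1 ≤ M := by
      rcases lt_or_ge m 4 with hm4 | hm4
      · have hm3' : m = 3 := by omega
        have e1 : (W k (m - 1)).length = 4 := by rw [hm3', hk3]; decide
        have e2 : (W k (m - 2)).length = 2 := by rw [hm3', hk3]; decide
        have e3 : (W k (m - 3)).length = 1 := by rw [hm3', hk3]; decide
        omega
      · have h1 := decomp k (m - 2) hk (by omega)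
        rw [show m - 2 + 1 - k = m - 4 from by omega, show m - 2 + 2 - k = m - 3 from by omega,
          show m - 2 + 3 - k = m - 2 from by omega, show m - 2 + 1 = m - 1 from by omega,
          show k - 2 = 1 from by omega] at h1
        have h2 : (W k (m - 1)).length
            = (W k (m - 2)).length + ((W k (m - 3)).length + (W k (m - 4)).length) := by
          rw [h1]; simp
        have := W_length_pos k (by omega) (m - 4)
        omega
    set q := t + (L - 1) - (L + M) with hqd
    have hq : t + (L - 1) = L + M + q := by omega
    have hqf : q < f := by omega
    have htval : t = M + q + 1 := by omega
    have hx0 : Vl[M - 1]? = some (m - 1) := by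
      rw [hVsplit, List.getElem?_append_left (by omega : M - 1 < (W k m).length), hdm',
        List.getElem?_append_left (by omega : M - 1 < (W k (m - 1)).length),
        show M - 1 = (W k (m - 1)).length - 1 from by omega]
      exact W_last? k (by omega) (m - 1)
    have hx : (W k (m + 1))[t + (M - 1)]? = some (m - 1) := by
      rw [pref_get? ht (by omega), hx0]
    have hxval : t + (M - 1) = 2 * M + q := by omega
    have h3 := congrArg (fun l : List ℕ => l[t + (M - 1)]?) hd'
    have h5' : (Rest ++ B) ++ T = B ++ T := by rw [hRnil]; rfl
    rw [h5', List.getElem?_append_right (by omega : (W k m).length ≤ t + (M - 1)),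
      List.getElem?_append_left (by omega : t + (M - 1) - (W k m).length < B.length),
      hMB] at h3
    have h7 := h3.symm.trans hx
    have h6 := W_unique? k (by omega) (m - 1) _ h7
    omega
  · -- k ≥ 4 case: length contradiction
    have hRf : f ≤ Rest.length := by
      have h1 : m - 1 ∈ List.range' (m + 3 - k) (k - 3) := by
        rw [List.mem_range'_1]
        omega
      have h2 := flatten_range'_len_ge k (m + 3 - k) (k - 3) (m - 1) h1
      have h3 : f ≤ (W k (m - 1)).length := by
        rw [hfd]
        exact W_length_mono k (by omega : m + 1 - k ≤ m - 1)
      rw [hRest]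
      omega
    omega
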